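/- Let n ≥ 1 and K ≥ 1 be integers, let h_0,…,h_K ∈ ℂ, let S ∈ ℂ^{n×n}, let 0 < ε < 1, and let E ∈ ℂ^{n×n} satisfy ‖E‖₂ ≤ ε. Define M̄ = max_{0≤ℓ≤K} Σ_{k=ℓ}^K |h_k| C(k,ℓ) ‖S‖₂^{k−ℓ}. Then ρ(H_h(S+E) − H_h(S)) ≤ ‖H_h(S+E) − H_h(S)‖₂ ≤ M̄ · ε(1 − ε^K)/(1 − ε). -/

import Mathlib

open scoped BigOperators
open Matrix

/-- Operator 2-norm (largest singular value) of a complex matrix. -/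
noncomputable def opNorm {m n : ℕ} (A : Matrix (Fin m) (Fin n) ℂ) : ℝ :=
  ‖LinearMap.toContinuousLinearMap (Matrix.toEuclideanLin A)‖

/-- Euclidean norm of a complex vector. -/
noncomputable def vnorm {n : ℕ} (x : Fin n → ℂ) : ℝ :=
  ‖(WithLp.equiv 2 (Fin n → ℂ)).symm x‖

/-- Spectral radius: maximum modulus of the eigenvalues. -/
noncomputable def specRad {n : ℕ} (A : Matrix (Fin n) (Fin n) ℂ) : ℝ :=
  sSup ((fun z : ℂ => ‖z‖) '' spectrum ℂ A)

/-- ε-pseudospectrum. -/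
def pseudoSpec {n : ℕ} (ε : ℝ) (A : Matrix (Fin n) (Fin n) ℂ) : Set ℂ :=
  {z | ∃ E : Matrix (Fin n) (Fin n) ℂ, opNorm E ≤ ε ∧ z ∈ spectrum ℂ (A + E)}

/-- ε-pseudospectral radius. -/
noncomputable def pseudoSpecRad {n : ℕ} (ε : ℝ) (A : Matrix (Fin n) (Fin n) ℂ) : ℝ :=
  sSup ((fun z : ℂ => ‖z‖) '' pseudoSpec ε A)

/-- The Bernstein change-of-basis matrix M(K,R):
`M_{i,j} = (−1)^{i−j} C(K,j) C(K−j, i−j) / R^i` for `j ≤ i`, and `0` otherwise. -/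
noncomputable def Mmat (K : ℕ) (R : ℝ) : Matrix (Fin (K+1)) (Fin (K+1)) ℝ :=
  fun i j =>
    if (j : ℕ) ≤ (i : ℕ) then
      ((-1 : ℝ) ^ ((i : ℕ) - (j : ℕ)) * (K.choose j) *
        ((K - (j : ℕ)).choose ((i : ℕ) - (j : ℕ)))) / R ^ (i : ℕ)
    else 0

/-- Graph filter `H_h(S) = Σ_{k=0}^K h_k S^k`. -/
noncomputable def filt {n : ℕ} (K : ℕ) (h : ℕ → ℂ) (S : Matrix (Fin n) (Fin n) ℂ) :
    Matrix (Fin n) (Fin n) ℂ :=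
  ∑ k ∈ Finset.range (K+1), h k • S ^ k

/-- Vector of absolute values of the first K+1 coefficients. -/
noncomputable def absVec (K : ℕ) (h : ℕ → ℂ) : Fin (K+1) → ℝ := fun i => ‖h i‖

/-- The constant `M̄ = max_{0≤ℓ≤K} Σ_{k=ℓ}^K |h_k| C(k,ℓ) ‖S‖₂^{k−ℓ}`. -/
noncomputable def Mbar {n : ℕ} (K : ℕ) (h : ℕ → ℂ) (S : Matrix (Fin n) (Fin n) ℂ) : ℝ :=
  ⨆ ℓ : Fin (K+1), ∑ k ∈ Finset.Icc (ℓ : ℕ) K,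
    ‖h k‖ * (k.choose ℓ) * opNorm S ^ (k - (ℓ : ℕ))

/-- Complex ReLU: `CReLU(x + iy) = max(x,0) + i max(y,0)`. -/
noncomputable def CReLU (z : ℂ) : ℂ := ⟨max z.re 0, max z.im 0⟩

/-- Entrywise complex ReLU on vectors. -/
noncomputable def CReLUv {n : ℕ} (x : Fin n → ℂ) : Fin n → ℂ := fun i => CReLU (x i)


section Aux

lemma opNorm_eq' {n : ℕ} (A : Matrix (Fin n) (Fin n) ℂ) :
    opNorm A = ‖Matrix.toEuclideanCLM (𝕜 := ℂ) A‖ := rfl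

lemma norm_add_pow_sub_pow {A : Type*} [NormedRing A] [NormOneClass A] (x y : A) :
    ∀ k : ℕ, ‖(x + y) ^ k - x ^ k‖ ≤ (‖x‖ + ‖y‖) ^ k - ‖x‖ ^ k := by
  intro k
  induction k with
  | zero => simp
  | succ k ih =>
    have hid : (x + y) ^ (k+1) - x ^ (k+1)
        = ((x + y) ^ k - x ^ k) * (x + y) + x ^ k * y := by
      rw [pow_succ, pow_succ]; noncomm_ring
    calc ‖(x + y) ^ (k+1) - x ^ (k+1)‖
        ≤ ‖((x + y) ^ k - x ^ k) * (x + y)‖ + ‖x ^ k * y‖ := by rw [hid]; exact norm_add_le _ _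
      _ ≤ ‖(x + y) ^ k - x ^ k‖ * ‖x + y‖ + ‖x ^ k‖ * ‖y‖ := by
          gcongr <;> [exact norm_mul_le _ _; exact norm_mul_le _ _]
      _ ≤ ((‖x‖ + ‖y‖) ^ k - ‖x‖ ^ k) * (‖x‖ + ‖y‖) + ‖x‖ ^ k * ‖y‖ := by
          refine add_le_add (mul_le_mul ih (norm_add_le _ _) (norm_nonneg _) ?_)
            (mul_le_mul_of_nonneg_right (norm_pow_le x k) (norm_nonneg _))
          have := norm_nonneg ((x + y) ^ k - x ^ k)
          linarith [ih]
      _ = (‖x‖ + ‖y‖) ^ (k+1) - ‖x‖ ^ (k+1) := by ring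

lemma binom_expand (a e : ℝ) (k : ℕ) :
    (a + e) ^ k - a ^ k = ∑ ℓ ∈ Finset.Icc 1 k, (k.choose ℓ : ℝ) * a ^ (k - ℓ) * e ^ ℓ := by
  have herase : (Finset.range (k+1)).erase 0 = Finset.Icc 1 k := by
    ext m; simp [Finset.mem_erase, Finset.mem_range, Finset.mem_Icc]; omega
  have hpow := add_pow e a k
  have hsum := Finset.sum_erase_add (Finset.range (k+1))
    (fun m => e ^ m * a ^ (k - m) * (k.choose m : ℝ))
    (Finset.mem_range.mpr (Nat.succ_pos k))
  rw [herase] at hsum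
  have : (a + e) ^ k = (∑ ℓ ∈ Finset.Icc 1 k, e ^ ℓ * a ^ (k - ℓ) * (k.choose ℓ : ℝ)) + a ^ k := by
    rw [add_comm a e, hpow, ← hsum]; simp
  rw [this]
  rw [add_sub_cancel_right]
  exact Finset.sum_congr rfl fun ℓ _ => by ring

lemma swap_sum (K : ℕ) (f : ℕ → ℕ → ℝ) :
    ∑ k ∈ Finset.range (K+1), ∑ ℓ ∈ Finset.Icc 1 k, f k ℓ
      = ∑ ℓ ∈ Finset.Icc 1 K, ∑ k ∈ Finset.Icc ℓ K, f k ℓ := by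
  rw [Finset.sum_sigma', Finset.sum_sigma']
  refine Finset.sum_nbij' (fun x => ⟨x.2, x.1⟩) (fun x => ⟨x.2, x.1⟩) ?_ ?_ (fun _ _ => rfl)
    (fun _ _ => rfl) (fun _ _ => rfl) <;>
  simp only [Finset.mem_Icc, Finset.mem_range, Sigma.forall, Finset.mem_sigma] <;>
  omega

lemma geom_Icc (ε : ℝ) (hε1 : ε ≠ 1) (K : ℕ) :
    ∑ ℓ ∈ Finset.Icc 1 K, ε ^ ℓ = ε * (1 - ε ^ K) / (1 - ε) := by
  have h1 : ∑ ℓ ∈ Finset.Icc 1 K, ε ^ ℓ = ∑ i ∈ Finset.range K, ε ^ (i + 1) := by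
    rw [← Finset.Ico_add_one_right_eq_Icc]
    rw [Finset.sum_Ico_eq_sum_range]
    simp [add_comm]
  rw [h1]
  have h2 : ∑ i ∈ Finset.range K, ε ^ (i + 1) = ε * ∑ i ∈ Finset.range K, ε ^ i := by
    rw [Finset.mul_sum]
    exact Finset.sum_congr rfl fun i _ => by ring
  rw [h2, geom_sum_eq hε1]
  rw [mul_div_assoc]
  congr 1
  rw [← neg_div_neg_eq]
  ring_nf

end Aux

set_option maxHeartbeats 2000000 in
set_option synthInstance.maxHeartbeats 1000000 in
/-- **Bound of GSO Permutation Error.** -/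
theorem stmt_1 {n K : ℕ} (hn : 1 ≤ n) (hK : 1 ≤ K) (h : ℕ → ℂ)
    (S : Matrix (Fin n) (Fin n) ℂ) (ε : ℝ) (hε0 : 0 < ε) (hε1 : ε < 1)
    (E : Matrix (Fin n) (Fin n) ℂ) (hE : opNorm E ≤ ε) :
    specRad (filt K h (S + E) - filt K h S) ≤ opNorm (filt K h (S + E) - filt K h S) ∧
    opNorm (filt K h (S + E) - filt K h S) ≤ Mbar K h S * (ε * (1 - ε ^ K) / (1 - ε)) := by
  classical
  haveI : Nonempty (Fin n) := ⟨⟨0, hn⟩⟩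
  haveI : Nontrivial (EuclideanSpace ℂ (Fin n)) := inferInstance
  set φ := Matrix.toEuclideanCLM (𝕜 := ℂ) (n := Fin n) with hφ
  set D := filt K h (S + E) - filt K h S with hD
  constructor
  · -- spectral radius ≤ operator norm
    refine Real.sSup_le ?_ (norm_nonneg _)
    rintro r ⟨z, hz, rfl⟩
    have hz' : z ∈ spectrum ℂ (φ D) := by
      rwa [AlgEquiv.spectrum_eq (Matrix.toEuclideanCLM (𝕜 := ℂ) (n := Fin n)) D]
    have := spectrum.norm_le_norm_of_mem hz'
    exact this.trans_eq (opNorm_eq' D).symm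
  · set x := φ S with hx
    set y := φ E with hy
    have hyε : ‖y‖ ≤ ε := by rw [← opNorm_eq'] at *; exact hE
    set a := opNorm S with ha
    have hax : a = ‖x‖ := opNorm_eq' S
    have ha0 : 0 ≤ a := by rw [hax]; exact norm_nonneg _
    -- rewrite the difference through φ
    have hfilt : ∀ T : Matrix (Fin n) (Fin n) ℂ,
        φ (filt K h T) = ∑ k ∈ Finset.range (K+1), h k • (φ T) ^ k := by
      intro T
      rw [filt, map_sum]
      exact Finset.sum_congr rfl fun k _ => by rw [_root_.map_smul, map_pow]
    have hrw : φ D = ∑ k ∈ Finset.range (K+1), h k • ((x + y) ^ k - x ^ k) := by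
      rw [hD, map_sub, hfilt, hfilt, map_add, ← Finset.sum_sub_distrib]
      exact Finset.sum_congr rfl fun k _ => (smul_sub _ _ _).symm
    have key : ∀ k : ℕ, ‖(x + y) ^ k - x ^ k‖ ≤ (a + ε) ^ k - a ^ k := by
      intro k
      refine (norm_add_pow_sub_pow x y k).trans ?_
      rw [← hax]
      have : (a + ‖y‖) ^ k ≤ (a + ε) ^ k :=
        pow_le_pow_left₀ (add_nonneg ha0 (norm_nonneg _)) (by linarith) k
      linarith
    -- bound on Mbar terms
    have hMbar : ∀ ℓ : ℕ, ℓ ≤ K →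
        (∑ k ∈ Finset.Icc ℓ K, ‖h k‖ * (k.choose ℓ : ℝ) * a ^ (k - ℓ)) ≤ Mbar K h S := by
      intro ℓ hℓ
      have hbdd : BddAbove (Set.range fun ℓ' : Fin (K+1) =>
          ∑ k ∈ Finset.Icc (ℓ' : ℕ) K, ‖h k‖ * (k.choose ℓ' : ℝ) * opNorm S ^ (k - (ℓ' : ℕ))) :=
        Set.Finite.bddAbove (Set.finite_range _)
      have := le_ciSup hbdd (⟨ℓ, Nat.lt_succ_of_le hℓ⟩ : Fin (K+1))
      simpa [Mbar, ha] using this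
    calc opNorm D = ‖φ D‖ := opNorm_eq' D
      _ = ‖∑ k ∈ Finset.range (K+1), h k • ((x + y) ^ k - x ^ k)‖ := by rw [hrw]
      _ ≤ ∑ k ∈ Finset.range (K+1), ‖h k • ((x + y) ^ k - x ^ k)‖ := norm_sum_le _ _
      _ = ∑ k ∈ Finset.range (K+1), ‖h k‖ * ‖(x + y) ^ k - x ^ k‖ := by
          exact Finset.sum_congr rfl fun k _ =>
            (norm_smul (h k) ((x + y) ^ k - x ^ k)).trans (by rfl)
      _ ≤ ∑ k ∈ Finset.range (K+1), ‖h k‖ * ((a + ε) ^ k - a ^ k) := by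
          refine Finset.sum_le_sum fun k _ => ?_
          exact mul_le_mul_of_nonneg_left (key k) (norm_nonneg _)
      _ = ∑ k ∈ Finset.range (K+1), ∑ ℓ ∈ Finset.Icc 1 k,
            (‖h k‖ * (k.choose ℓ : ℝ) * a ^ (k - ℓ)) * ε ^ ℓ := by
          refine Finset.sum_congr rfl fun k _ => ?_
          rw [binom_expand a ε k, Finset.mul_sum]
          exact Finset.sum_congr rfl fun ℓ _ => by ring
      _ = ∑ ℓ ∈ Finset.Icc 1 K, ∑ k ∈ Finset.Icc ℓ K,
            (‖h k‖ * (k.choose ℓ : ℝ) * a ^ (k - ℓ)) * ε ^ ℓ :=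
          swap_sum K _
      _ = ∑ ℓ ∈ Finset.Icc 1 K,
            (∑ k ∈ Finset.Icc ℓ K, ‖h k‖ * (k.choose ℓ : ℝ) * a ^ (k - ℓ)) * ε ^ ℓ := by
          refine Finset.sum_congr rfl fun ℓ _ => ?_
          rw [Finset.sum_mul]
      _ ≤ ∑ ℓ ∈ Finset.Icc 1 K, Mbar K h S * ε ^ ℓ := by
          refine Finset.sum_le_sum fun ℓ hℓ => ?_
          have hℓK : ℓ ≤ K := (Finset.mem_Icc.mp hℓ).2
          exact mul_le_mul_of_nonneg_right (hMbar ℓ hℓK) (by positivity)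
      _ = Mbar K h S * (ε * (1 - ε ^ K) / (1 - ε)) := by
          rw [← Finset.mul_sum, geom_Icc ε (ne_of_lt hε1) K]
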